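/- Let T be a random variable taking values t_1 < t_2 < ⋯ < t_m (positive reals) with probabilities p_1, …, p_m summing to 1, and let T_max = t_m. Let F be its distribution function and F⁻¹ the generalized inverse distribution function. Then ∫_0^1 F⁻¹(p)/(2√(1−p)) dp ≤ t_1 + (‖T‖_2/√2)·√(ln(T_max/t_1)), where ‖T‖_2 = √(Σ_j p_j t_j²). -/

import Mathlib

/-- The distribution function `F(x) = Σ_{j : t_j ≤ x} p_j` of a finitely supported
random variable taking value `t j` with probability `p j`. -/
noncomputable def cdf {m : ℕ} (t p : Fin m → ℝ) (x : ℝ) : ℝ :=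
  ∑ j, if t j ≤ x then p j else 0

/-- The generalized inverse distribution function `F⁻¹(q) = inf {x : F(x) ≥ q}`. -/
noncomputable def invCdf {m : ℕ} (t p : Fin m → ℝ) (q : ℝ) : ℝ :=
  sInf {x : ℝ | q ≤ cdf t p x}

open MeasureTheory intervalIntegral Set

section Helpers

variable {n : ℕ} {t p : Fin (n + 1) → ℝ}

lemma cdf_nonneg (hp : ∀ j, 0 ≤ p j) (x : ℝ) : 0 ≤ cdf t p x :=
  Finset.sum_nonneg fun j _ => by split <;> simp [hp j]

lemma cdf_le_one (hp : ∀ j, 0 ≤ p j) (hps : ∑ j, p j = 1) (x : ℝ) : cdf t p x ≤ 1 := by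
  rw [← hps]
  exact Finset.sum_le_sum fun j _ => by split <;> simp [hp j]

lemma cdf_of_lt (ht : Monotone t) {x : ℝ} (hx : x < t 0) : cdf t p x = 0 := by
  apply Finset.sum_eq_zero; intro j _
  have : ¬ t j ≤ x := fun h => absurd ((ht (Fin.zero_le j)).trans h) (not_le.mpr hx)
  simp [this]

lemma cdf_last (ht : Monotone t) (hps : ∑ j, p j = 1) : cdf t p (t (Fin.last n)) = 1 := by
  rw [← hps]
  exact Finset.sum_congr rfl fun j _ => by simp [ht (Fin.le_last j)]

lemma bddBelow_cdf_set (ht : Monotone t) {q : ℝ} (hq : 0 < q) :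
    BddBelow {x : ℝ | q ≤ cdf t p x} := by
  refine ⟨t 0, fun y hy => ?_⟩
  by_contra h
  push_neg at h
  rw [Set.mem_setOf_eq, cdf_of_lt ht h] at hy
  exact absurd hy (not_le.mpr hq)

lemma invCdf_le_of_le_cdf (ht : Monotone t) {q x : ℝ} (hq : 0 < q)
    (hx : q ≤ cdf t p x) : invCdf t p q ≤ x :=
  csInf_le (bddBelow_cdf_set ht hq) hx

lemma le_invCdf (ht : Monotone t) (hps : ∑ j, p j = 1) {q : ℝ} (hq : 0 < q) (hq1 : q ≤ 1) :
    t 0 ≤ invCdf t p q := by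
  apply le_csInf ⟨t (Fin.last n), by rw [Set.mem_setOf_eq, cdf_last ht hps]; exact hq1⟩
  intro y hy
  by_contra h
  push_neg at h
  rw [Set.mem_setOf_eq, cdf_of_lt ht h] at hy
  exact absurd hy (not_le.mpr hq)

lemma invCdf_of_nonpos (hp : ∀ j, 0 ≤ p j) {q : ℝ} (hq : q ≤ 0) : invCdf t p q = 0 := by
  have : {x : ℝ | q ≤ cdf t p x} = Set.univ :=
    Set.eq_univ_of_forall fun x => hq.trans (cdf_nonneg hp x)
  rw [invCdf, this]
  exact Real.sInf_of_not_bddBelow not_bddBelow_univ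

lemma invCdf_nonneg (ht : Monotone t) (ht0 : 0 < t 0) (hp : ∀ j, 0 ≤ p j)
    (hps : ∑ j, p j = 1) {q : ℝ} (hq0 : 0 ≤ q) (hq1 : q ≤ 1) : 0 ≤ invCdf t p q := by
  rcases eq_or_lt_of_le hq0 with h | h
  · rw [invCdf_of_nonpos hp h.symm.le]
  · exact ht0.le.trans (le_invCdf ht hps h hq1)

lemma invCdf_le_last (ht : Monotone t) (ht0 : 0 < t 0) (hp : ∀ j, 0 ≤ p j)
    (hps : ∑ j, p j = 1) {q : ℝ} (hq1 : q ≤ 1) : invCdf t p q ≤ t (Fin.last n) := by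
  rcases le_or_gt q 0 with h | h
  · rw [invCdf_of_nonpos hp h]
    exact (ht0.trans_le (ht (Fin.zero_le _))).le
  · exact invCdf_le_of_le_cdf ht h (by rw [cdf_last ht hps]; exact hq1)

lemma invCdf_monotoneOn (ht : Monotone t) (ht0 : 0 < t 0) (hp : ∀ j, 0 ≤ p j)
    (hps : ∑ j, p j = 1) : MonotoneOn (invCdf t p) (Set.Icc (0:ℝ) 1) := by
  intro q hq q' hq' hqq'
  rcases le_or_gt q 0 with h | h
  · rw [invCdf_of_nonpos hp h]
    exact invCdf_nonneg ht ht0 hp hps hq'.1 hq'.2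
  · apply csInf_le_csInf (bddBelow_cdf_set ht h)
    · exact ⟨t (Fin.last n), by rw [Set.mem_setOf_eq, cdf_last ht hps]; exact hq'.2⟩
    · exact fun x hx => le_trans hqq' hx

lemma invCdf_abs_le (ht : Monotone t) (ht0 : 0 < t 0) (hp : ∀ j, 0 ≤ p j)
    (hps : ∑ j, p j = 1) (q : ℝ) : ‖invCdf t p q‖ ≤ t (Fin.last n) := by
  have htl : 0 < t (Fin.last n) := ht0.trans_le (ht (Fin.zero_le _))
  rcases le_or_gt q 0 with h | h
  · rw [invCdf_of_nonpos hp h]; simpa using htl.le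
  rcases le_or_gt q 1 with h1 | h1
  · rw [Real.norm_eq_abs, abs_of_nonneg (invCdf_nonneg ht ht0 hp hps h.le h1)]
    exact invCdf_le_last ht ht0 hp hps h1
  · have : {x : ℝ | q ≤ cdf t p x} = ∅ := by
      apply Set.eq_empty_of_forall_notMem
      intro x hx
      exact absurd (hx.trans (cdf_le_one hp hps x)) (not_le.mpr h1)
    rw [invCdf, this, Real.sInf_empty]
    simpa using htl.le


lemma invCdf_sq_monotoneOn (ht : Monotone t) (ht0 : 0 < t 0) (hp : ∀ j, 0 ≤ p j)
    (hps : ∑ j, p j = 1) : MonotoneOn (fun q => (invCdf t p q) ^ 2) (Set.Icc (0:ℝ) 1) := by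
  intro q hq q' hq' hqq'
  dsimp only
  have h0 := invCdf_nonneg ht ht0 hp hps hq.1 hq.2
  exact pow_le_pow_left₀ h0 (invCdf_monotoneOn ht ht0 hp hps hq hq' hqq') 2

lemma invCdf_intervalIntegrable (ht : Monotone t) (ht0 : 0 < t 0) (hp : ∀ j, 0 ≤ p j)
    (hps : ∑ j, p j = 1) {a b : ℝ} (ha : a ∈ Set.Icc (0:ℝ) 1) (hb : b ∈ Set.Icc (0:ℝ) 1) :
    IntervalIntegrable (invCdf t p) volume a b :=
  ((invCdf_monotoneOn ht ht0 hp hps).mono (Set.uIcc_subset_Icc ha hb)).intervalIntegrable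

lemma invCdf_sq_intervalIntegrable (ht : Monotone t) (ht0 : 0 < t 0) (hp : ∀ j, 0 ≤ p j)
    (hps : ∑ j, p j = 1) {a b : ℝ} (ha : a ∈ Set.Icc (0:ℝ) 1) (hb : b ∈ Set.Icc (0:ℝ) 1) :
    IntervalIntegrable (fun q => (invCdf t p q) ^ 2) volume a b :=
  ((invCdf_sq_monotoneOn ht ht0 hp hps).mono (Set.uIcc_subset_Icc ha hb)).intervalIntegrable

lemma integral_sq_invCdf_le (ht : StrictMono t) (ht0 : 0 < t 0) (hp : ∀ j, 0 ≤ p j)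
    (hps : ∑ j, p j = 1) :
    ∫ q in (0:ℝ)..1, (invCdf t p q) ^ 2 ≤ ∑ j, p j * t j ^ 2 := by
  set P : ℕ → ℝ := fun i => if h : i < n + 1 then p ⟨i, h⟩ else 0 with hP
  set Q : ℕ → ℝ := fun i => if h : i < n + 1 then t ⟨i, h⟩ else 0 with hQ
  set S : ℕ → ℝ := fun k => ∑ i ∈ Finset.range k, P i with hS
  have hP0 : ∀ i, 0 ≤ P i := by
    intro i; rw [hP]; dsimp only; split
    · exact hp _
    · exact le_refl 0
  have hSmono : Monotone S := by
    intro k l hkl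
    exact Finset.sum_le_sum_of_subset_of_nonneg (Finset.range_subset_range.mpr hkl)
      (fun i _ _ => hP0 i)
  have hS0 : S 0 = 0 := by simp [hS]
  have hS1 : S (n + 1) = 1 := by
    rw [hS, ← hps]
    dsimp only
    rw [← Fin.sum_univ_eq_sum_range P (n + 1)]
    exact Finset.sum_congr rfl fun i _ => by simp [hP, i.isLt, Nat.lt_succ_iff.mp i.isLt]
  have hSmem : ∀ k, k ≤ n + 1 → S k ∈ Set.Icc (0:ℝ) 1 := by
    intro k hk
    constructor
    · rw [← hS0]; exact hSmono (Nat.zero_le k)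
    · rw [← hS1]; exact hSmono hk
  have hcdf_at : ∀ k (hk : k < n + 1), cdf t p (t ⟨k, hk⟩) = S (k + 1) := by
    intro k hk
    have e1 : cdf t p (t ⟨k, hk⟩) = ∑ i : Fin (n + 1), if (i : ℕ) < k + 1 then P i else 0 := by
      apply Finset.sum_congr rfl
      intro i _
      have hiff : (t i ≤ t ⟨k, hk⟩) ↔ ((i : ℕ) < k + 1) := by
        rw [ht.le_iff_le, Fin.le_def]; exact Nat.lt_succ_iff.symm
      rw [hP]
      simp only [i.isLt, dif_pos]
      by_cases hc : (i : ℕ) < k + 1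
      · rw [if_pos (hiff.mpr hc), if_pos hc]
      · rw [if_neg (fun h => hc (hiff.mp h)), if_neg hc]
    rw [e1, Fin.sum_univ_eq_sum_range (fun i => if i < k + 1 then P i else 0) (n + 1),
      ← Finset.sum_filter]
    congr 1
    ext i
    simp only [Finset.mem_filter, Finset.mem_range]
    omega
  have hstep : ∀ k (hk : k < n + 1),
      ∫ q in S k..S (k + 1), (invCdf t p q) ^ 2 ≤ P k * Q k ^ 2 := by
    intro k hk
    have hSk := hSmem k hk.le
    have hSk1 := hSmem (k + 1) hk
    have hble : S k ≤ S (k + 1) := hSmono (Nat.le_succ k)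
    have hbound : ∀ q ∈ Set.Icc (S k) (S (k + 1)), (invCdf t p q) ^ 2 ≤ Q k ^ 2 := by
      intro q hq
      have hq0 : 0 ≤ q := hSk.1.trans hq.1
      have hq1 : q ≤ 1 := hq.2.trans hSk1.2
      have h1 : invCdf t p q ≤ Q k := by
        rw [hQ]; simp only [hk, dif_pos]
        rcases eq_or_lt_of_le hq0 with h | h
        · rw [invCdf_of_nonpos hp h.symm.le]
          exact (ht0.trans_le (ht.monotone (Fin.zero_le _))).le
        · exact invCdf_le_of_le_cdf ht.monotone h (by rw [hcdf_at k hk]; exact hq.2)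
      exact pow_le_pow_left₀ (invCdf_nonneg ht.monotone ht0 hp hps hq0 hq1) h1 2
    calc ∫ q in S k..S (k + 1), (invCdf t p q) ^ 2
        ≤ ∫ _ in S k..S (k + 1), Q k ^ 2 := by
          apply intervalIntegral.integral_mono_on hble
            (invCdf_sq_intervalIntegrable ht.monotone ht0 hp hps hSk hSk1)
            intervalIntegrable_const hbound
      _ = (S (k + 1) - S k) * Q k ^ 2 := by rw [intervalIntegral.integral_const, smul_eq_mul]
      _ = P k * Q k ^ 2 := by
          congr 1
          rw [hS]
          dsimp only
          rw [Finset.sum_range_succ]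
          ring
  have hsplit : ∫ q in (0:ℝ)..1, (invCdf t p q) ^ 2
      = ∑ k ∈ Finset.range (n + 1), ∫ q in S k..S (k + 1), (invCdf t p q) ^ 2 := by
    rw [intervalIntegral.sum_integral_adjacent_intervals
      (fun k hk => invCdf_sq_intervalIntegrable ht.monotone ht0 hp hps
        (hSmem k hk.le) (hSmem (k + 1) hk)), hS0, hS1]
  rw [hsplit]
  calc ∑ k ∈ Finset.range (n + 1), ∫ q in S k..S (k + 1), (invCdf t p q) ^ 2
      ≤ ∑ k ∈ Finset.range (n + 1), P k * Q k ^ 2 :=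
        Finset.sum_le_sum fun k hk => hstep k (Finset.mem_range.mp hk)
    _ = ∑ j : Fin (n + 1), p j * t j ^ 2 := by
        rw [← Fin.sum_univ_eq_sum_range (fun k => P k * Q k ^ 2) (n + 1)]
        exact Finset.sum_congr rfl fun i _ => by simp [hP, hQ, i.isLt, Nat.lt_succ_iff.mp i.isLt]

lemma two_sqrt_inv_eq {q : ℝ} (hq : q ≤ 1) :
    (2 * Real.sqrt (1 - q))⁻¹ = (1 - q) ^ (-(1/2) : ℝ) / 2 := by
  set u : ℝ := 1 - q with hu
  have hu0 : 0 ≤ u := by simp only [hu]; linarith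
  rcases eq_or_lt_of_le hu0 with h | h
  · rw [← h, Real.sqrt_zero, mul_zero, inv_zero, Real.zero_rpow (by norm_num), zero_div]
  · rw [Real.sqrt_eq_rpow, mul_inv, ← Real.rpow_neg hu0]
    ring

lemma g_intervalIntegrable : IntervalIntegrable
    (fun q : ℝ => (2 * Real.sqrt (1 - q))⁻¹) volume 0 1 := by
  have h1 : IntervalIntegrable (fun u : ℝ => u ^ (-(1/2) : ℝ) / 2) volume 0 1 :=
    (intervalIntegrable_rpow' (by norm_num)).div_const 2
  have h2 := (h1.comp_sub_left 1).symm
  rw [sub_self, sub_zero] at h2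
  rw [intervalIntegrable_iff_integrableOn_Ioc_of_le zero_le_one] at h2 ⊢
  exact h2.congr_fun (fun q hq => (two_sqrt_inv_eq hq.2).symm) measurableSet_Ioc

lemma integral_g {b : ℝ} (hb0 : 0 ≤ b) (hb1 : b ≤ 1) :
    ∫ q in b..1, (2 * Real.sqrt (1 - q))⁻¹ = Real.sqrt (1 - b) := by
  have key : ∀ c : ℝ, 0 ≤ c → ∫ u in (0:ℝ)..c, (2 * Real.sqrt u)⁻¹ = Real.sqrt c := by
    intro c hc
    have heq : Set.EqOn (fun u : ℝ => (2 * Real.sqrt u)⁻¹)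
        (fun u : ℝ => u ^ (-(1/2) : ℝ) / 2) (Set.uIcc 0 c) := by
      intro u hu
      rw [Set.uIcc_of_le hc] at hu
      have hu0 : 0 ≤ u := hu.1
      dsimp only
      rcases eq_or_lt_of_le hu0 with h | h
      · rw [← h, Real.sqrt_zero, mul_zero, inv_zero, Real.zero_rpow (by norm_num), zero_div]
      · rw [Real.sqrt_eq_rpow, mul_inv, ← Real.rpow_neg hu0]
        ring
    rw [intervalIntegral.integral_congr heq, intervalIntegral.integral_div,
      integral_rpow (Or.inl (by norm_num))]
    rw [show (-(1/2 : ℝ) + 1) = 1/2 by norm_num, Real.zero_rpow (by norm_num),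
      Real.sqrt_eq_rpow]
    ring
  have h := intervalIntegral.integral_comp_sub_left
    (a := b) (b := 1) (fun u : ℝ => (2 * Real.sqrt u)⁻¹) 1
  rw [sub_self] at h
  rw [h, key (1 - b) (by linarith)]

lemma integral_gsq {b : ℝ} (hb0 : 0 ≤ b) (hb1 : b < 1) :
    ∫ q in (0:ℝ)..b, ((2 * Real.sqrt (1 - q))⁻¹) ^ 2 = Real.log (1 / (1 - b)) / 4 := by
  have heq : Set.EqOn (fun q : ℝ => ((2 * Real.sqrt (1 - q))⁻¹) ^ 2)
      (fun q : ℝ => (1 - q)⁻¹ / 4) (Set.uIcc 0 b) := by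
    intro q hq
    rw [Set.uIcc_of_le hb0] at hq
    have h1 : 0 < 1 - q := by linarith [hq.2]
    dsimp only
    rw [inv_pow, mul_pow, Real.sq_sqrt h1.le, mul_inv]
    norm_num
    ring
  rw [intervalIntegral.integral_congr heq, intervalIntegral.integral_div]
  have h := intervalIntegral.integral_comp_sub_left
    (a := (0:ℝ)) (b := b) (fun u : ℝ => u⁻¹) 1
  rw [sub_zero] at h
  rw [h, integral_inv (Set.notMem_uIcc_of_lt (by linarith) (by norm_num)),
    one_div]
lemma gsq_contOn {b : ℝ} (hb0 : 0 ≤ b) (hb1 : b < 1) :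
    IntervalIntegrable (fun q : ℝ => ((2 * Real.sqrt (1 - q))⁻¹) ^ 2) volume 0 b := by
  apply ContinuousOn.intervalIntegrable
  apply ContinuousOn.pow
  apply ContinuousOn.inv₀
  · exact (continuous_const.mul (Real.continuous_sqrt.comp
      (continuous_const.sub continuous_id))).continuousOn
  · intro q hq
    rw [Set.uIcc_of_le hb0] at hq
    have : 0 < 1 - q := by linarith [hq.2]
    positivity


/-- For a random variable `T` with values `0 < t_1 < ⋯ < t_m` and probabilities
`p_1, …, p_m` summing to 1,
`∫_0^1 F⁻¹(p)/(2√(1−p)) dp ≤ t_1 + (‖T‖₂/√2)·√(ln(T_max/t_1))`,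
where `‖T‖₂ = √(Σ_j p_j t_j²)` and `T_max = t_m`. -/
theorem integral_invCdf_bound (n : ℕ) (t p : Fin (n + 1) → ℝ)
    (ht : StrictMono t) (ht0 : 0 < t 0)
    (hp : ∀ j, 0 ≤ p j) (hps : ∑ j, p j = 1) :
    ∫ q in (0:ℝ)..1, invCdf t p q / (2 * Real.sqrt (1 - q)) ≤
      t 0 + (Real.sqrt (∑ j, p j * t j ^ 2) / Real.sqrt 2) *
        Real.sqrt (Real.log (t (Fin.last n) / t 0)) := by
  have htm := ht.monotone
  set tm := t (Fin.last n) with htmdef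
  have htm0 : 0 < tm := ht0.trans_le (htm (Fin.zero_le _))
  have ht0tm : t 0 ≤ tm := htm (Fin.zero_le _)
  have hr0 : 0 < t 0 / tm := div_pos ht0 htm0
  have hr1 : t 0 / tm ≤ 1 := (div_le_one htm0).mpr ht0tm
  set b : ℝ := 1 - (t 0 / tm) ^ 2 with hbdef
  have hb0 : 0 ≤ b := by rw [hbdef]; nlinarith [hr0, hr1]
  have hb1 : b < 1 := by rw [hbdef]; nlinarith [pow_pos hr0 2]
  have h1b : 1 - b = (t 0 / tm) ^ 2 := by rw [hbdef]; ring
  set g : ℝ → ℝ := fun q => (2 * Real.sqrt (1 - q))⁻¹ with hgdef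
  have hg0 : ∀ q, 0 ≤ g q := fun q => inv_nonneg.mpr (by positivity)
  have hIcc0 : (0:ℝ) ∈ Set.Icc (0:ℝ) 1 := ⟨le_refl 0, zero_le_one⟩
  have hIccb : b ∈ Set.Icc (0:ℝ) 1 := ⟨hb0, hb1.le⟩
  have hIcc1 : (1:ℝ) ∈ Set.Icc (0:ℝ) 1 := ⟨zero_le_one, le_refl 1⟩
  have hsub : ∀ a c : ℝ, a ∈ Set.Icc (0:ℝ) 1 → c ∈ Set.Icc (0:ℝ) 1 →
      Set.uIcc a c ⊆ Set.uIcc (0:ℝ) 1 := by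
    intro a c ha hc
    rw [Set.uIcc_of_le zero_le_one]
    exact Set.uIcc_subset_Icc ha hc
  -- a.e. strong measurability of invCdf on subsets of [0,1]
  have haesm : ∀ s : Set ℝ, s ⊆ Set.Icc (0:ℝ) 1 →
      AEStronglyMeasurable (invCdf t p) (volume.restrict s) := by
    intro s hs
    have h := aemeasurable_restrict_of_monotoneOn (μ := volume) measurableSet_Icc
      (invCdf_monotoneOn htm ht0 hp hps)
    exact (h.mono_measure (Measure.restrict_mono hs le_rfl)).aestronglyMeasurable
  -- integrability of the product
  have hprod : ∀ a c : ℝ, a ∈ Set.Icc (0:ℝ) 1 → c ∈ Set.Icc (0:ℝ) 1 →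
      IntervalIntegrable (fun q => invCdf t p q * g q) volume a c := by
    intro a c ha hc
    have hgi : IntervalIntegrable g volume a c :=
      g_intervalIntegrable.mono_set (hsub a c ha hc)
    rw [intervalIntegrable_iff] at hgi ⊢
    refine hgi.bdd_mul ?_ (Filter.Eventually.of_forall fun x => invCdf_abs_le htm ht0 hp hps x)
    apply haesm
    exact (Set.uIoc_subset_uIcc).trans (Set.uIcc_subset_Icc ha hc)
  -- split the integral
  have hsplit : ∫ q in (0:ℝ)..1, invCdf t p q * g q =
      (∫ q in (0:ℝ)..b, invCdf t p q * g q) + ∫ q in b..1, invCdf t p q * g q :=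
    (intervalIntegral.integral_add_adjacent_intervals
      (hprod 0 b hIcc0 hIccb) (hprod b 1 hIccb hIcc1)).symm
  -- Part A : tail integral ≤ t 0
  have hA : ∫ q in b..1, invCdf t p q * g q ≤ t 0 := by
    have hgi1 : IntervalIntegrable g volume b 1 :=
      g_intervalIntegrable.mono_set (hsub b 1 hIccb hIcc1)
    have hmono1 : ∫ q in b..1, invCdf t p q * g q ≤ ∫ q in b..1, tm * g q := by
      apply intervalIntegral.integral_mono_on hb1.le (hprod b 1 hIccb hIcc1)
        (hgi1.const_mul tm)
      intro q hq
      exact mul_le_mul_of_nonneg_right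
        (invCdf_le_last htm ht0 hp hps hq.2) (hg0 q)
    have hval : ∫ q in b..1, tm * g q = t 0 := by
      rw [intervalIntegral.integral_const_mul, hgdef]
      rw [integral_g hb0 hb1.le, h1b, Real.sqrt_sq hr0.le]
      field_simp
    linarith
  -- Part B : Cauchy-Schwarz
  have hB : ∫ q in (0:ℝ)..b, invCdf t p q * g q ≤
      Real.sqrt (∑ j, p j * t j ^ 2) * Real.sqrt (Real.log (tm / t 0) / 2) := by
    have h22 : (2:ℝ).HolderConjugate 2 := ⟨by norm_num, by norm_num, by norm_num⟩
    have hofr : ENNReal.ofReal (2:ℝ) = 2 := by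
      rw [ENNReal.ofReal_ofNat]
    have hfaesm : AEStronglyMeasurable (invCdf t p) (volume.restrict (Set.Ioc 0 b)) :=
      haesm _ ((Set.Ioc_subset_Icc_self).trans (Set.Icc_subset_Icc le_rfl hb1.le))
    have hfm : MemLp (invCdf t p) (ENNReal.ofReal 2) (volume.restrict (Set.Ioc 0 b)) := by
      rw [hofr]
      exact MemLp.of_bound hfaesm tm
        (Filter.Eventually.of_forall (invCdf_abs_le htm ht0 hp hps))
    have hgmeas : Measurable g := by
      apply Measurable.inv
      exact (continuous_const.mul (Real.continuous_sqrt.comp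
        (continuous_const.sub continuous_id))).measurable
    have hgm : MemLp g (ENNReal.ofReal 2) (volume.restrict (Set.Ioc 0 b)) := by
      rw [hofr, memLp_two_iff_integrable_sq hgmeas.aestronglyMeasurable]
      have h := gsq_contOn hb0 hb1
      rwa [intervalIntegrable_iff_integrableOn_Ioc_of_le hb0] at h
    have hfnn : 0 ≤ᵐ[volume.restrict (Set.Ioc 0 b)] invCdf t p := by
      rw [Filter.EventuallyLE, ae_restrict_iff' measurableSet_Ioc]
      apply Filter.Eventually.of_forall
      intro q hq
      exact invCdf_nonneg htm ht0 hp hps hq.1.le (hq.2.trans hb1.le)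
    have hgnn : 0 ≤ᵐ[volume.restrict (Set.Ioc 0 b)] g :=
      Filter.Eventually.of_forall hg0
    have hH := integral_mul_le_Lp_mul_Lq_of_nonneg h22 hfnn hgnn hfm hgm
    simp only [Real.rpow_two] at hH
    -- identify the integrals
    have hL : ∫ q in (0:ℝ)..b, invCdf t p q * g q
        = ∫ a in Set.Ioc (0:ℝ) b, invCdf t p a * g a := by
      rw [intervalIntegral.integral_of_le hb0]
    have hfsq : ∫ a in Set.Ioc (0:ℝ) b, invCdf t p a ^ 2 ≤ ∑ j, p j * t j ^ 2 := by
      rw [← intervalIntegral.integral_of_le hb0]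
      have hadd := intervalIntegral.integral_add_adjacent_intervals
        (invCdf_sq_intervalIntegrable htm ht0 hp hps hIcc0 hIccb)
        (invCdf_sq_intervalIntegrable htm ht0 hp hps hIccb hIcc1)
      have hnn : 0 ≤ ∫ q in b..1, invCdf t p q ^ 2 :=
        intervalIntegral.integral_nonneg hb1.le (fun q _ => sq_nonneg _)
      have hle := integral_sq_invCdf_le ht ht0 hp hps
      linarith
    have hgsq : ∫ a in Set.Ioc (0:ℝ) b, g a ^ 2 = Real.log (tm / t 0) / 2 := by
      rw [← intervalIntegral.integral_of_le hb0, hgdef]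
      rw [integral_gsq hb0 hb1, h1b]
      rw [show (1:ℝ) / (t 0 / tm) ^ 2 = (tm / t 0) ^ 2 by
        rw [one_div, ← inv_pow, inv_div]]
      rw [Real.log_pow]
      push_cast
      ring
    rw [hL]
    refine hH.trans ?_
    rw [hgsq]
    have hsq1 : (∫ a in Set.Ioc (0:ℝ) b, invCdf t p a ^ 2) ^ ((1:ℝ)/2)
        ≤ Real.sqrt (∑ j, p j * t j ^ 2) := by
      rw [← Real.sqrt_eq_rpow]
      exact Real.sqrt_le_sqrt hfsq
    have hsq2 : (Real.log (tm / t 0) / 2) ^ ((1:ℝ)/2)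
        = Real.sqrt (Real.log (tm / t 0) / 2) := (Real.sqrt_eq_rpow _).symm
    rw [hsq2]
    exact mul_le_mul_of_nonneg_right hsq1 (Real.sqrt_nonneg _)
  -- combine
  have hfinal : Real.sqrt (∑ j, p j * t j ^ 2) * Real.sqrt (Real.log (tm / t 0) / 2)
      = (Real.sqrt (∑ j, p j * t j ^ 2) / Real.sqrt 2) * Real.sqrt (Real.log (tm / t 0)) := by
    have hlog0 : 0 ≤ Real.log (tm / t 0) :=
      Real.log_nonneg ((one_le_div ht0).mpr ht0tm)
    rw [Real.sqrt_div hlog0 2]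
    ring
  calc ∫ q in (0:ℝ)..1, invCdf t p q / (2 * Real.sqrt (1 - q))
      = ∫ q in (0:ℝ)..1, invCdf t p q * g q := by
        apply intervalIntegral.integral_congr
        intro q _
        simp only [hgdef, div_eq_mul_inv]
    _ = (∫ q in (0:ℝ)..b, invCdf t p q * g q) + ∫ q in b..1, invCdf t p q * g q := hsplit
    _ ≤ Real.sqrt (∑ j, p j * t j ^ 2) * Real.sqrt (Real.log (tm / t 0) / 2) + t 0 :=
        add_le_add hB hA
    _ = t 0 + (Real.sqrt (∑ j, p j * t j ^ 2) / Real.sqrt 2) *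
          Real.sqrt (Real.log (tm / t 0)) := by rw [hfinal]; ring
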